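/- Let X and Y be compact metric spaces and G, H closed relations on X, Y respectively that are topological conjugates. Then ent(G) = ent(H). -/

import Mathlib

open Filter Topology

/-- Minimal number of members of `U` needed to cover `K`. -/
noncomputable def covN {Z : Type*} (K : Set Z) (U : Set (Set Z)) : ℕ :=
  sInf {n | ∃ V : Finset (Set Z), ↑V ⊆ U ∧ V.card = n ∧ K ⊆ ⋃ S ∈ V, S}

/-- The family of `n`-boxes generated by the family `α`. -/
def boxes {X : Type*} (α : Set (Set X)) (n : ℕ) : Set (Set (Fin n → X)) :=
  {S | ∃ A : Fin n → Set X, (∀ i, A i ∈ α) ∧ S = {x | ∀ i, x i ∈ A i}}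

/-- The `m`-th Mahavier product `⋆_{i=1}^m G⁻¹`. -/
def mah {X : Type*} (G : Set (X × X)) (m : ℕ) : Set (Fin (m + 1) → X) :=
  {x | ∀ i : Fin m, (x i.succ, x i.castSucc) ∈ G}

/-- `α` is an open cover of the whole space. -/
def IsOpenCover {X : Type*} [TopologicalSpace X] (α : Set (Set X)) : Prop :=
  (∀ U ∈ α, IsOpen U) ∧ ⋃₀ α = Set.univ

/-- The entropy of `G` with respect to the open cover `α`
(the limit of `log N(⋆_{i=1}^m G⁻¹, α^{m+1}) / m`). -/
noncomputable def entCov {X : Type*} [TopologicalSpace X] (G : Set (X × X))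
    (α : Set (Set X)) : ℝ :=
  limsup (fun m : ℕ => Real.log (covN (mah G m) (boxes α (m + 1))) / m) atTop

open Classical in
/-- The entropy of a closed relation `G`. -/
noncomputable def entRel {X : Type*} [TopologicalSpace X] (G : Set (X × X)) : EReal :=
  if G = ∅ then 0
  else sSup {x : EReal | ∃ α : Set (Set X), IsOpenCover α ∧ x = (entCov G α : EReal)}

section Aux

variable {Z W : Type*}

lemma covN_mem_forward (e : Z ≃ W) (K : Set Z) (U : Set (Set Z)) (n : ℕ)
    (h : n ∈ {n | ∃ V : Finset (Set Z), ↑V ⊆ U ∧ V.card = n ∧ K ⊆ ⋃ S ∈ V, S}) :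
    n ∈ {n | ∃ V : Finset (Set W), ↑V ⊆ (Set.image e) '' U ∧ V.card = n ∧
      e '' K ⊆ ⋃ S ∈ V, S} := by
  classical
  obtain ⟨V, hVU, hcard, hcov⟩ := h
  refine ⟨V.image (Set.image e), ?_, ?_, ?_⟩
  · intro S hS
    simp only [Finset.coe_image] at hS
    exact Set.image_mono hVU hS
  · rw [Finset.card_image_of_injective _ (Set.image_injective.2 e.injective), hcard]
  · rintro w ⟨z, hz, rfl⟩
    obtain ⟨S, hS, hzS⟩ := Set.mem_iUnion₂.1 (hcov hz)
    exact Set.mem_iUnion₂.2 ⟨e '' S, Finset.mem_image_of_mem _ hS, Set.mem_image_of_mem e hzS⟩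

lemma covN_congr (e : Z ≃ W) (K : Set Z) (U : Set (Set Z)) :
    covN (e '' K) ((Set.image e) '' U) = covN K U := by
  unfold covN
  congr 1
  ext n
  constructor
  · intro h
    have h2 := covN_mem_forward e.symm (e '' K) ((Set.image e) '' U) n h
    have hK : e.symm '' (e '' K) = K := by
      simp [Set.image_image]
    have hU : (Set.image e.symm) '' ((Set.image e) '' U) = U := by
      rw [Set.image_image]
      have : (fun S => e.symm '' (e '' S)) = fun S : Set Z => S := by
        funext S; simp [Set.image_image]
      rw [this, Set.image_id']
    rwa [hK, hU] at h2
  · exact covN_mem_forward e K U n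

end Aux

section Conj

variable {X Y : Type*} [TopologicalSpace X] [TopologicalSpace Y] (φ : X ≃ₜ Y)

/-- The coordinatewise equivalence on tuples. -/
def eqN (n : ℕ) : (Fin n → X) ≃ (Fin n → Y) :=
  Equiv.piCongrRight fun _ => φ.toEquiv

@[simp] lemma eqN_apply (n : ℕ) (x : Fin n → X) (i : Fin n) :
    eqN φ n x i = φ (x i) := rfl

lemma mah_image {G : Set (X × X)} {H : Set (Y × Y)}
    (hconj : ∀ x y : X, (x, y) ∈ G ↔ (φ x, φ y) ∈ H) (m : ℕ) :
    (eqN φ (m + 1)) '' mah G m = mah H m := by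
  ext y
  constructor
  · rintro ⟨x, hx, rfl⟩
    intro i
    exact (hconj _ _).1 (hx i)
  · intro hy
    refine ⟨fun i => φ.symm (y i), ?_, ?_⟩
    · intro i
      have := hy i
      rw [hconj]
      simpa using this
    · funext i; simp
  
lemma box_image (n : ℕ) (A : Fin n → Set X) :
    (eqN φ n) '' {x | ∀ i, x i ∈ A i} = {y | ∀ i, y i ∈ φ '' A i} := by
  ext y
  constructor
  · rintro ⟨x, hx, rfl⟩ i
    exact Set.mem_image_of_mem φ (hx i)
  · intro hy
    refine ⟨fun i => φ.symm (y i), ?_, ?_⟩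
    · intro i
      obtain ⟨a, ha, hay⟩ := hy i
      show φ.symm (y i) ∈ A i
      rw [← hay]
      simpa using ha
    · funext i; simp

lemma boxes_image (α : Set (Set X)) (n : ℕ) :
    boxes ((Set.image φ) '' α) n = (Set.image (eqN φ n)) '' boxes α n := by
  ext S
  constructor
  · rintro ⟨B, hB, rfl⟩
    choose A hA hAB using hB
    refine ⟨{x | ∀ i, x i ∈ A i}, ⟨A, hA, rfl⟩, ?_⟩
    rw [box_image]
    simp only [hAB]
  · rintro ⟨T, ⟨A, hA, rfl⟩, rfl⟩
    refine ⟨fun i => φ '' A i, fun i => Set.mem_image_of_mem _ (hA i), ?_⟩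
    rw [box_image]

lemma entCov_conj {G : Set (X × X)} {H : Set (Y × Y)}
    (hconj : ∀ x y : X, (x, y) ∈ G ↔ (φ x, φ y) ∈ H) (α : Set (Set X)) :
    entCov G α = entCov H ((Set.image φ) '' α) := by
  unfold entCov
  congr 1
  funext m
  congr 2
  rw [boxes_image, ← mah_image φ hconj m, covN_congr]

lemma isOpenCover_image {α : Set (Set X)} (hα : IsOpenCover α) :
    IsOpenCover ((Set.image φ) '' α) := by
  constructor
  · rintro U ⟨A, hA, rfl⟩
    exact φ.isOpenMap A (hα.1 A hA)
  · rw [← Set.image_sUnion, hα.2, Set.image_univ_of_surjective φ.surjective]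

lemma entSet_subset {G : Set (X × X)} {H : Set (Y × Y)}
    (hconj : ∀ x y : X, (x, y) ∈ G ↔ (φ x, φ y) ∈ H) :
    {x : EReal | ∃ α : Set (Set X), IsOpenCover α ∧ x = (entCov G α : EReal)} ⊆
    {x : EReal | ∃ β : Set (Set Y), IsOpenCover β ∧ x = (entCov H β : EReal)} := by
  rintro x ⟨α, hα, rfl⟩
  exact ⟨(Set.image φ) '' α, isOpenCover_image φ hα, by rw [entCov_conj φ hconj α]⟩

end Conj

theorem stmt_12 {X Y : Type*} [MetricSpace X] [CompactSpace X]
    [MetricSpace Y] [CompactSpace Y]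
    (G : Set (X × X)) (H : Set (Y × Y)) (hGc : IsClosed G) (hHc : IsClosed H)
    (φ : X ≃ₜ Y) (hconj : ∀ x y : X, (x, y) ∈ G ↔ (φ x, φ y) ∈ H) :
    entRel G = entRel H := by
  have hconj' : ∀ y₁ y₂ : Y, (y₁, y₂) ∈ H ↔ (φ.symm y₁, φ.symm y₂) ∈ G := by
    intro y₁ y₂
    rw [hconj (φ.symm y₁) (φ.symm y₂)]
    simp
  have hempty : G = ∅ ↔ H = ∅ := by
    constructor
    · intro hG
      ext ⟨y₁, y₂⟩
      simp only [Set.mem_empty_iff_false, iff_false]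
      intro hy
      have := (hconj' y₁ y₂).1 hy
      rw [hG] at this
      exact this
    · intro hH
      ext ⟨x₁, x₂⟩
      simp only [Set.mem_empty_iff_false, iff_false]
      intro hx
      have := (hconj x₁ x₂).1 hx
      rw [hH] at this
      exact this
  unfold entRel
  by_cases hG : G = ∅
  · rw [if_pos hG, if_pos (hempty.1 hG)]
  · rw [if_neg hG, if_neg (fun h => hG (hempty.2 h))]
    congr 1
    apply Set.Subset.antisymm
    · exact entSet_subset φ hconj
    · exact entSet_subset φ.symm hconj'
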